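/- There exists a constant C > 0 such that for every continuously differentiable function v : [0,1] → ℝ with v(0) = v(1) = 0 one has ‖v‖_{L²} ≤ C ‖v′‖_{(H¹)′}, i.e. the L² norm of v is controlled by the dual H¹ norm of its derivative. -/

import Mathlib

open Set

noncomputable section

/-- Elementwise (right-sided) derivative: on each half-open element the spline agrees with a
polynomial, and `ederiv` computes the derivative of that polynomial piece. -/
def ederiv (v : ℝ → ℝ) : ℝ → ℝ := fun x => derivWithin v (Set.Ici x) x

/-- The `j`-th element of the partition of `ℝ` induced by the breakpoints
`ζ 0 < ζ 1 < ⋯ < ζ (k-1)` (the first and last elements are extended to all of `ℝ`). -/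
def piece (k : ℕ) (ζ : ℕ → ℝ) (j : ℕ) : Set ℝ :=
  if j = 0 then Iio (ζ 1)
  else if j = k - 2 then Ici (ζ (k - 2))
  else Ico (ζ j) (ζ (j + 1))

/-- `v` is a spline of degree `q` over the breakpoint vector `ζ 0 < ⋯ < ζ (k-1)`:
on each element it coincides with a polynomial of degree at most `q`, and for `q ≥ 1`
it is globally of class `C^{q-1}`. -/
def IsSpline (q k : ℕ) (ζ : ℕ → ℝ) (v : ℝ → ℝ) : Prop :=
  (∀ j ≤ k - 2, ∃ P : Polynomial ℝ, P.natDegree ≤ q ∧ ∀ x ∈ piece k ζ j, v x = P.eval x) ∧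
  (1 ≤ q → ContDiff ℝ (q - 1 : ℕ) v)

/-- The merged breakpoint vector `Z_M = (ζ 0, ζ 2, ζ 3, …, ζ (k-3), ζ (k-1))`, obtained by
removing the second and the second-to-last breakpoints; it has `k - 2` entries. -/
def merged (k : ℕ) (ζ : ℕ → ℝ) : ℕ → ℝ :=
  fun j => if j = 0 then ζ 0 else if j = k - 3 then ζ (k - 1) else ζ (j + 1)

/-- `ζ 0 = 0 < ζ 1 < ⋯ < ζ (k-1) = 1` is a breakpoint vector for `[0,1]`. -/
def IsBreakpoints (k : ℕ) (ζ : ℕ → ℝ) : Prop :=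
  (∀ j, j + 1 < k → ζ j < ζ (j + 1)) ∧ ζ 0 = 0 ∧ ζ (k - 1) = 1

/-- `α`-quasi-uniformity: every gap is at least `α` times the largest gap. -/
def QuasiUniform (α : ℝ) (k : ℕ) (ζ : ℕ → ℝ) : Prop :=
  ∀ i j, i + 1 < k → j + 1 < k → α * (ζ (i + 1) - ζ i) ≤ ζ (j + 1) - ζ j

/-- `L²(0,1)` norm. -/
def L2norm (f : ℝ → ℝ) : ℝ := Real.sqrt (∫ x in (0:ℝ)..1, f x ^ 2)

/-- Broken `H¹(0,1)` norm, with the elementwise derivative. -/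
def H1norm (f : ℝ → ℝ) : ℝ :=
  Real.sqrt ((∫ x in (0:ℝ)..1, f x ^ 2) + ∫ x in (0:ℝ)..1, ederiv f x ^ 2)

/-- Dual `(H¹)'` norm of `φ ∈ L²(0,1)`. -/
def dualH1norm (φ : ℝ → ℝ) : ℝ :=
  sSup {r : ℝ | ∃ w : ℝ → ℝ, ContDiff ℝ 1 w ∧
    (∫ x in (0:ℝ)..1, (w x ^ 2 + deriv w x ^ 2)) ≤ 1 ∧ r = ∫ x in (0:ℝ)..1, φ x * w x}

/-- `S^p_{0,∂}`: degree-`p` splines on `Z` vanishing together with their first derivative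
at both endpoints. -/
def S0d (p k : ℕ) (ζ : ℕ → ℝ) : Set (ℝ → ℝ) :=
  {v | IsSpline p k ζ v ∧ v 0 = 0 ∧ v 1 = 0 ∧ ederiv v 0 = 0 ∧ ederiv v 1 = 0}

/-- `S^{p-1}_0`: degree-`(p-1)` splines on `Z` vanishing at both endpoints. -/
def S0 (p k : ℕ) (ζ : ℕ → ℝ) : Set (ℝ → ℝ) :=
  {v | IsSpline (p - 1) k ζ v ∧ v 0 = 0 ∧ v 1 = 0}

/-- `S^{p-1}_{0,∫}`: degree-`(p-1)` splines on `Z` vanishing at both endpoints and with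
zero mean. -/
def S0i (p k : ℕ) (ζ : ℕ → ℝ) : Set (ℝ → ℝ) :=
  {v | IsSpline (p - 1) k ζ v ∧ v 0 = 0 ∧ v 1 = 0 ∧ (∫ x in (0:ℝ)..1, v x) = 0}

/-- `S^{p-1}_M`: degree-`(p-1)` splines on the merged breakpoint vector `Z_M`. -/
def SM (p k : ℕ) (ζ : ℕ → ℝ) : Set (ℝ → ℝ) :=
  {v | IsSpline (p - 1) (k - 2) (merged k ζ) v}

/-- `S^{p-1}_{M,∫}`: degree-`(p-1)` splines on `Z_M` with zero mean. -/
def SMi (p k : ℕ) (ζ : ℕ → ℝ) : Set (ℝ → ℝ) :=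
  {v | IsSpline (p - 1) (k - 2) (merged k ζ) v ∧ (∫ x in (0:ℝ)..1, v x) = 0}

/-- `S^{p-2}_M`: degree-`(p-2)` splines on the merged breakpoint vector `Z_M`. -/
def SM2 (p k : ℕ) (ζ : ℕ → ℝ) : Set (ℝ → ℝ) :=
  {v | IsSpline (p - 2) (k - 2) (merged k ζ) v}


open MeasureTheory in
lemma cs_aux {f g : ℝ → ℝ} (hf : Continuous f) (hg : Continuous g) :
    ∫ x in (0:ℝ)..1, f x * g x ≤
      Real.sqrt (∫ x in (0:ℝ)..1, f x ^ 2) * Real.sqrt (∫ x in (0:ℝ)..1, g x ^ 2) := by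
  set μ := volume.restrict (Set.Ioc (0:ℝ) 1) with hμ
  haveI : IsFiniteMeasure μ := ⟨by simp [hμ, Measure.restrict_apply_univ]⟩
  have hmem : ∀ {h : ℝ → ℝ}, Continuous h → MemLp h (ENNReal.ofReal 2) μ := by
    intro h hh
    obtain ⟨C, hC⟩ := (isCompact_Icc (a := (0:ℝ)) (b := 1)).exists_bound_of_continuousOn
      hh.continuousOn
    exact MemLp.of_bound hh.aestronglyMeasurable C
      ((ae_restrict_iff' measurableSet_Ioc).2 (ae_of_all _ fun x hx => hC x (Ioc_subset_Icc_self hx)))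
  have hpq : (2:ℝ).HolderConjugate 2 := Real.HolderConjugate.two_two
  have key := integral_mul_le_Lp_mul_Lq_of_nonneg (μ := μ) hpq
    (ae_of_all _ fun x => abs_nonneg (f x)) (ae_of_all _ fun x => abs_nonneg (g x))
    (hmem hf.abs) (hmem hg.abs)
  have h2 : ∀ y : ℝ, |y| ^ (2:ℝ) = y ^ 2 := fun y => by
    rw [show (2:ℝ) = ((2:ℕ):ℝ) by norm_num, Real.rpow_natCast, sq_abs]
  simp only [h2] at key
  have e1 : ∫ x in (0:ℝ)..1, f x * g x ≤ ∫ x in (0:ℝ)..1, |f x| * |g x| := by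
    apply intervalIntegral.integral_mono_on zero_le_one
      ((hf.mul hg).intervalIntegrable _ _) ((hf.abs.mul hg.abs).intervalIntegrable _ _)
    intro x _; exact (le_abs_self _).trans (abs_mul (f x) (g x)).le
  have e2 : ∫ x in (0:ℝ)..1, |f x| * |g x| = ∫ x, |f x| * |g x| ∂μ := by
    rw [intervalIntegral.integral_of_le zero_le_one]
  have e3 : ∫ x in (0:ℝ)..1, f x ^ 2 = ∫ x, f x ^ 2 ∂μ := by
    rw [intervalIntegral.integral_of_le zero_le_one]
  have e4 : ∫ x in (0:ℝ)..1, g x ^ 2 = ∫ x, g x ^ 2 ∂μ := by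
    rw [intervalIntegral.integral_of_le zero_le_one]
  have hs : ∀ r : ℝ, 0 ≤ r → r ^ (1/2 : ℝ) = Real.sqrt r := fun r hr => by
    rw [Real.sqrt_eq_rpow]
  rw [e3, e4]
  calc ∫ x in (0:ℝ)..1, f x * g x ≤ ∫ x, |f x| * |g x| ∂μ := by rw [← e2]; exact e1
    _ ≤ (∫ x, f x ^ 2 ∂μ) ^ (1/2:ℝ) * (∫ x, g x ^ 2 ∂μ) ^ (1/2:ℝ) := key
    _ = _ := by
        rw [hs _ (integral_nonneg fun x => sq_nonneg _), hs _ (integral_nonneg fun x => sq_nonneg _)]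

open MeasureTheory

/-- there is `C > 0` such that every `C¹` function vanishing at `0` and `1`
satisfies `‖v‖_{L²} ≤ C ‖v'‖_{(H¹)'}`. -/
theorem L2_le_dualH1_of_deriv :
    ∃ C > (0:ℝ), ∀ v : ℝ → ℝ, ContDiff ℝ 1 v → v 0 = 0 → v 1 = 0 →
      L2norm v ≤ C * dualH1norm (deriv v) := by
  refine ⟨Real.sqrt 2, by positivity, ?_⟩
  intro v hv h0 h1
  have hvc : Continuous v := hv.continuous
  have hφc : Continuous (deriv v) := (contDiff_one_iff_deriv.mp hv).2
  set N := Real.sqrt (∫ x in (0:ℝ)..1, v x ^ 2) with hNdef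
  have hInn : 0 ≤ ∫ x in (0:ℝ)..1, v x ^ 2 :=
    intervalIntegral.integral_nonneg zero_le_one fun x _ => sq_nonneg _
  have hN0 : 0 ≤ N := Real.sqrt_nonneg _
  have hNsq : N ^ 2 = ∫ x in (0:ℝ)..1, v x ^ 2 := Real.sq_sqrt hInn
  set g : ℝ → ℝ := fun x => ∫ t in x..(1:ℝ), v t with hgdef
  have hg' : ∀ x : ℝ, HasDerivAt g (-(v x)) x := fun x =>
    (intervalIntegral.integral_hasStrictDerivAt_left (hvc.intervalIntegrable _ _)
      (hvc.stronglyMeasurableAtFilter _ _) hvc.continuousAt).hasDerivAt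
  have hgd : Differentiable ℝ g := fun x => (hg' x).differentiableAt
  have hgc : Continuous g := hgd.continuous
  -- bound on g
  have gbound : ∀ x ∈ Icc (0:ℝ) 1, |g x| ≤ N := by
    intro x hx
    have h1le : |g x| ≤ ∫ t in x..(1:ℝ), |v t| :=
      intervalIntegral.abs_integral_le_integral_abs hx.2
    have h2le : (∫ t in x..(1:ℝ), |v t|) ≤ ∫ t in (0:ℝ)..1, |v t| :=
      intervalIntegral.integral_mono_interval hx.1 hx.2 le_rfl
        (ae_of_all _ fun t => abs_nonneg (v t)) (hvc.abs.intervalIntegrable _ _)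
    have h3le : (∫ t in (0:ℝ)..1, |v t|) ≤ N := by
      have := cs_aux (f := fun t => |v t|) (g := fun _ => (1:ℝ)) hvc.abs continuous_const
      simpa [sq_abs, hNdef] using this
    exact h1le.trans (h2le.trans h3le)
  -- integration by parts
  have hparts : (∫ x in (0:ℝ)..1, g x * deriv v x) = N ^ 2 := by
    have := intervalIntegral.integral_mul_deriv_eq_deriv_mul
      (u := g) (v := v) (u' := fun x => -(v x)) (v' := deriv v) (a := (0:ℝ)) (b := 1)
      (fun x _ => hg' x) (fun x _ => (hv.differentiable one_ne_zero x).hasDerivAt)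
      ((hvc.neg).intervalIntegrable _ _) (hφc.intervalIntegrable _ _)
    have hg1 : g 1 = 0 := by simp [hgdef]
    rw [this, hg1, h0, hNsq]
    rw [h1]
    simp only [neg_mul, mul_zero, zero_mul, sub_zero, zero_sub, neg_neg,
      intervalIntegral.integral_neg, neg_neg]
    exact intervalIntegral.integral_congr fun x _ => (sq (v x)).symm
  -- the dual set
  set S := {r : ℝ | ∃ w : ℝ → ℝ, ContDiff ℝ 1 w ∧
    (∫ x in (0:ℝ)..1, (w x ^ 2 + deriv w x ^ 2)) ≤ 1 ∧
    r = ∫ x in (0:ℝ)..1, deriv v x * w x} with hSdef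
  -- S is bounded above
  have hbdd : BddAbove S := by
    refine ⟨Real.sqrt (∫ x in (0:ℝ)..1, deriv v x ^ 2), ?_⟩
    rintro r ⟨w, hw, hwle, rfl⟩
    have hwc : Continuous w := hw.continuous
    have hw'c : Continuous (deriv w) := (contDiff_one_iff_deriv.mp hw).2
    have h1le : (∫ x in (0:ℝ)..1, w x ^ 2) ≤ ∫ x in (0:ℝ)..1, (w x ^ 2 + deriv w x ^ 2) := by
      apply intervalIntegral.integral_mono_on zero_le_one
        ((hwc.pow 2).intervalIntegrable _ _)
        (((hwc.pow 2).add (hw'c.pow 2)).intervalIntegrable _ _)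
      intro x _; show w x ^ 2 ≤ w x ^ 2 + deriv w x ^ 2; nlinarith [sq_nonneg (deriv w x)]
    have h2le : Real.sqrt (∫ x in (0:ℝ)..1, w x ^ 2) ≤ 1 := by
      exact Real.sqrt_le_one.mpr (h1le.trans hwle)
    calc (∫ x in (0:ℝ)..1, deriv v x * w x)
        ≤ Real.sqrt (∫ x in (0:ℝ)..1, deriv v x ^ 2) *
            Real.sqrt (∫ x in (0:ℝ)..1, w x ^ 2) := cs_aux hφc hwc
      _ ≤ Real.sqrt (∫ x in (0:ℝ)..1, deriv v x ^ 2) * 1 := by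
          exact mul_le_mul_of_nonneg_left h2le (Real.sqrt_nonneg _)
      _ = _ := mul_one _
  -- the witness
  set c : ℝ := (Real.sqrt 2 * N)⁻¹ with hcdef
  have hc0 : 0 ≤ c := by positivity
  set w : ℝ → ℝ := fun x => c * g x with hwdef
  have hwd : ∀ x : ℝ, HasDerivAt w (c * (-(v x))) x := fun x => (hg' x).const_mul c
  have hwderiv : deriv w = fun x => c * (-(v x)) := funext fun x => (hwd x).deriv
  have hwcd : ContDiff ℝ 1 w :=
    contDiff_one_iff_deriv.mpr ⟨fun x => (hwd x).differentiableAt,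
      by rw [hwderiv]; exact continuous_const.mul hvc.neg⟩
  have hg2le : (∫ x in (0:ℝ)..1, g x ^ 2) ≤ N ^ 2 := by
    have : (∫ x in (0:ℝ)..1, g x ^ 2) ≤ ∫ x in (0:ℝ)..1, N ^ 2 := by
      apply intervalIntegral.integral_mono_on zero_le_one
        ((hgc.pow 2).intervalIntegrable _ _) (intervalIntegrable_const)
      intro x hx
      have := gbound x hx
      show g x ^ 2 ≤ N ^ 2
      nlinarith [abs_nonneg (g x), sq_abs (g x)]
    simpa using this
  have hconstraint : (∫ x in (0:ℝ)..1, (w x ^ 2 + deriv w x ^ 2)) ≤ 1 := by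
    rw [hwderiv]
    have hsplit : (∫ x in (0:ℝ)..1, ((fun x => c * g x) x ^ 2 + (fun x => c * (-(v x))) x ^ 2))
        = c ^ 2 * (∫ x in (0:ℝ)..1, g x ^ 2) + c ^ 2 * (∫ x in (0:ℝ)..1, v x ^ 2) := by
      rw [intervalIntegral.integral_add (f := fun x => (fun x => c * g x) x ^ 2) (g := fun x => (fun x => c * (-(v x))) x ^ 2) (((continuous_const.mul hgc).pow 2).intervalIntegrable _ _)
        (((continuous_const.mul hvc.neg).pow 2).intervalIntegrable _ _)]
      congr 1
      · rw [← intervalIntegral.integral_const_mul]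
        exact intervalIntegral.integral_congr fun x _ => by ring
      · rw [← intervalIntegral.integral_const_mul]
        exact intervalIntegral.integral_congr fun x _ => by ring
    rw [hwdef, hsplit, ← hNsq]
    have h1 : c ^ 2 * (∫ x in (0:ℝ)..1, g x ^ 2) + c ^ 2 * N ^ 2 ≤ c ^ 2 * (2 * N ^ 2) := by
      nlinarith [sq_nonneg c]
    refine h1.trans ?_
    rcases eq_or_lt_of_le hN0 with h | h
    · simp [hcdef, ← h]
    · have hs2 : Real.sqrt 2 > 0 := by positivity
      rw [hcdef, mul_inv, mul_pow, inv_pow, inv_pow,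
        Real.sq_sqrt (by norm_num : (0:ℝ) ≤ 2)]
      rw [mul_assoc]
      rw [inv_mul_le_iff₀ (by norm_num : (0:ℝ) < 2)]
      rw [mul_comm 2 (N ^ 2), ← mul_assoc]
      rw [inv_mul_cancel₀ (by positivity : N ^ 2 ≠ 0)]
      norm_num
  have hmem : c * N ^ 2 ∈ S := by
    refine ⟨w, hwcd, hconstraint, ?_⟩
    rw [← hparts, ← intervalIntegral.integral_const_mul]
    exact intervalIntegral.integral_congr fun x _ => by simp [hwdef]; ring
  have hle : c * N ^ 2 ≤ sSup S := le_csSup hbdd hmem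
  have hid : Real.sqrt 2 * (c * N ^ 2) = N := by
    rcases eq_or_lt_of_le hN0 with h | h
    · rw [← h]; ring
    · have hs2 : (0:ℝ) < Real.sqrt 2 := by positivity
      rw [hcdef]
      field_simp
  have : L2norm v = N := rfl
  rw [this, dualH1norm, ← hSdef, ← hid]
  exact mul_le_mul_of_nonneg_left hle (Real.sqrt_nonneg _)

end
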